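/- Let A ∈ ℝ^{m×n} and v ∈ ℝⁿ. Assume the source condition holds: there exists w ∈ ℝ^m such that (Aᵀw)_i = sign(v_i) for every i ∈ supp(v) and |(Aᵀw)_i| < 1 for every i ∉ supp(v). Assume further that A restricted to the subspace spanned by the standard basis vectors e_i with i ∈ supp(v) is injective. Then for all constants 0 < c₁ ≤ c₂ there exists a constant C > 0 such that for every δ > 0, every λ ∈ [c₁δ, c₂δ], every g^δ ∈ ℝ^m with ‖Av − g^δ‖₂ ≤ δ, and every minimizer v_λ^δ of the ℓ¹-Tikhonov functional z ↦ (1/2)‖Az − g^δ‖₂² + λ‖z‖₁ over ℝⁿ, one has ‖v_λ^δ − v‖₂ ≤ Cδ. -/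

import Mathlib

open Matrix

/-- The Euclidean (ℓ²) norm on `Fin k → ℝ`. -/
noncomputable def l2norm {k : ℕ} (x : Fin k → ℝ) : ℝ := Real.sqrt (∑ i, x i ^ 2)

/-- The ℓ¹ norm on `Fin k → ℝ`. -/
noncomputable def l1norm {k : ℕ} (x : Fin k → ℝ) : ℝ := ∑ i, |x i|

lemma l2norm_eq {k : ℕ} (x : Fin k → ℝ) :
    l2norm x = ‖(WithLp.toLp 2 x : EuclideanSpace ℝ (Fin k))‖ := by
  rw [EuclideanSpace.norm_eq]; simp [l2norm, Real.norm_eq_abs, sq_abs]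

lemma l2norm_nonneg' {k : ℕ} (x : Fin k → ℝ) : 0 ≤ l2norm x := Real.sqrt_nonneg _

lemma l2_triangle {k : ℕ} (x y : Fin k → ℝ) : l2norm (x + y) ≤ l2norm x + l2norm y := by
  rw [l2norm_eq x, l2norm_eq y, l2norm_eq (x + y)]
  rw [WithLp.toLp_add]; exact norm_add_le (E := EuclideanSpace ℝ (Fin k)) _ _

lemma l2norm_neg {k : ℕ} (x : Fin k → ℝ) : l2norm (-x) = l2norm x := by
  simp [l2norm, Pi.neg_apply]

lemma l2_sub_le {k : ℕ} (x y : Fin k → ℝ) : l2norm (x - y) ≤ l2norm x + l2norm y := by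
  have h : x - y = x + (-y) := by ring
  rw [h]
  calc l2norm (x + -y) ≤ l2norm x + l2norm (-y) := l2_triangle _ _
  _ = l2norm x + l2norm y := by rw [l2norm_neg]

lemma l2_sub_triangle {k : ℕ} (x y z : Fin k → ℝ) :
    l2norm (x - z) ≤ l2norm (x - y) + l2norm (y - z) := by
  have h : x - z = (x - y) + (y - z) := by ring
  rw [h]; exact l2_triangle _ _

lemma l2norm_negsub {k : ℕ} (x y : Fin k → ℝ) : l2norm (x - y) = l2norm (y - x) := by
  rw [l2norm_eq (x - y), l2norm_eq (y - x)]
  rw [WithLp.toLp_sub, WithLp.toLp_sub]; exact norm_sub_rev (E := EuclideanSpace ℝ (Fin k)) _ _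

lemma l2_le_l1 {k : ℕ} (x : Fin k → ℝ) : l2norm x ≤ l1norm x := by
  have h1 : ∑ i, x i ^ 2 ≤ (∑ i, |x i|) ^ 2 := by
    rw [sq (∑ i, |x i|), Finset.sum_mul]
    apply Finset.sum_le_sum
    intro i _
    have hle : |x i| ≤ ∑ j, |x j| :=
      Finset.single_le_sum (f := fun j => |x j|) (fun j _ => abs_nonneg _) (Finset.mem_univ i)
    calc x i ^ 2 = |x i| * |x i| := by rw [abs_mul_abs_self]; ring
    _ ≤ |x i| * ∑ j, |x j| := mul_le_mul_of_nonneg_left hle (abs_nonneg _)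
  have h2 : l2norm x ≤ Real.sqrt ((∑ i, |x i|) ^ 2) := Real.sqrt_le_sqrt h1
  rwa [Real.sqrt_sq (Finset.sum_nonneg fun i _ => abs_nonneg _)] at h2

lemma dot_le {k : ℕ} (w x : Fin k → ℝ) : w ⬝ᵥ x ≤ l2norm w * l2norm x := by
  have h := real_inner_le_norm (F := EuclideanSpace ℝ (Fin k))
    (WithLp.toLp 2 w : EuclideanSpace ℝ (Fin k)) (WithLp.toLp 2 x : EuclideanSpace ℝ (Fin k))
  have he : inner (𝕜 := ℝ) (WithLp.toLp 2 w : EuclideanSpace ℝ (Fin k))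
      (WithLp.toLp 2 x : EuclideanSpace ℝ (Fin k)) = w ⬝ᵥ x := by
    rw [PiLp.inner_apply]
    simp [dotProduct, RCLike.inner_apply, mul_comm]
  rw [he, ← l2norm_eq, ← l2norm_eq] at h
  exact h

/-- the matrix as a linear map between Euclidean spaces -/
noncomputable def matLin {m n : ℕ} (A : Matrix (Fin m) (Fin n) ℝ) :
    EuclideanSpace ℝ (Fin n) →ₗ[ℝ] EuclideanSpace ℝ (Fin m) where
  toFun z := WithLp.toLp 2 (A *ᵥ z)
  map_add' x y := by
    show WithLp.toLp 2 (A *ᵥ (x + y).ofLp) = _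
    rw [WithLp.ofLp_add, Matrix.mulVec_add]; rfl
  map_smul' c x := by
    show WithLp.toLp 2 (A *ᵥ (c • x).ofLp) = _
    rw [WithLp.ofLp_smul, Matrix.mulVec_smul]; rfl

lemma opbound {m n : ℕ} (A : Matrix (Fin m) (Fin n) ℝ) :
    ∃ M : ℝ, 0 ≤ M ∧ ∀ z : Fin n → ℝ, l2norm (A *ᵥ z) ≤ M * l2norm z := by
  let T := LinearMap.toContinuousLinearMap (matLin A)
  refine ⟨‖T‖, norm_nonneg _, fun z => ?_⟩
  have h := T.le_opNorm (WithLp.toLp 2 z : EuclideanSpace ℝ (Fin n))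
  rw [l2norm_eq (A *ᵥ z), l2norm_eq z]
  exact h

lemma injbound {m n : ℕ} (A : Matrix (Fin m) (Fin n) ℝ) (v : Fin n → ℝ)
    (hinj : ∀ z₁ z₂ : Fin n → ℝ, (∀ i, v i = 0 → z₁ i = 0) →
      (∀ i, v i = 0 → z₂ i = 0) → A *ᵥ z₁ = A *ᵥ z₂ → z₁ = z₂) :
    ∃ c : ℝ, 0 < c ∧ ∀ z : Fin n → ℝ, (∀ i, v i = 0 → z i = 0) →
      l2norm z ≤ c * l2norm (A *ᵥ z) := by
  classical
  let S : Submodule ℝ (EuclideanSpace ℝ (Fin n)) :=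
    { carrier := {z | ∀ i, v i = 0 → z i = 0}
      add_mem' := fun {a b} ha hb i hi => by
        show a i + b i = 0
        rw [ha i hi, hb i hi, add_zero]
      zero_mem' := fun i _ => rfl
      smul_mem' := fun c a ha i hi => by
        show c * a i = 0
        rw [ha i hi, mul_zero] }
  let T : S →ₗ[ℝ] EuclideanSpace ℝ (Fin m) := (matLin A).comp S.subtype
  have hT : Function.Injective T := by
    intro z₁ z₂ h
    exact Subtype.ext (WithLp.ofLp_injective 2 (hinj _ _ z₁.2 z₂.2 (congrArg WithLp.ofLp h)))
  let e : S ≃ₗ[ℝ] LinearMap.range T := LinearEquiv.ofInjective T hT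
  let f := LinearMap.toContinuousLinearMap (e.symm.toLinearMap)
  refine ⟨max ‖f‖ 1, lt_max_of_lt_right one_pos, fun z hz => ?_⟩
  set zS : S := ⟨WithLp.toLp 2 z, hz⟩ with hzS
  have h2 : ‖zS‖ ≤ ‖f‖ * ‖e zS‖ := by
    calc ‖zS‖ = ‖f (e zS)‖ := by rw [show f (e zS) = zS from e.symm_apply_apply zS]
    _ ≤ ‖f‖ * ‖e zS‖ := f.le_opNorm _
  have h3 : ‖e zS‖ = ‖T zS‖ := rfl
  have h4 : ‖zS‖ = l2norm z := by rw [l2norm_eq]; rfl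
  have h5 : ‖T zS‖ = l2norm (A *ᵥ z) := by rw [l2norm_eq]; rfl
  rw [h4, h3, h5] at h2
  calc l2norm z ≤ ‖f‖ * l2norm (A *ᵥ z) := h2
  _ ≤ max ‖f‖ 1 * l2norm (A *ᵥ z) := by
      apply mul_le_mul_of_nonneg_right (le_max_left _ _) (Real.sqrt_nonneg _)

lemma sign_bound : ∀ x : ℝ, |Real.sign x| ≤ 1 := by
  intro x
  rcases lt_trichotomy x 0 with h | h | h
  · rw [Real.sign_of_neg h]; norm_num
  · rw [h, Real.sign_zero]; norm_num
  · rw [Real.sign_of_pos h]; norm_num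

lemma rsign_mul_self (x : ℝ) : Real.sign x * x = |x| := by
  rcases lt_trichotomy x 0 with h | h | h
  · rw [Real.sign_of_neg h, abs_of_neg h]; ring
  · simp [h]
  · rw [Real.sign_of_pos h, abs_of_pos h]; ring

lemma quad_bound (t δ lam W c₂ : ℝ) (ht0 : 0 ≤ t) (hδ : 0 < δ) (hW0 : 0 ≤ W)
    (hlam2 : lam ≤ c₂ * δ) (hlam0 : 0 < lam)
    (hq : (1 / 2) * t ^ 2 ≤ (1 / 2) * δ ^ 2 + lam * (W * (δ + t))) :
    t ≤ (2 * c₂ * W + 1) * δ := by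
  have h1 : (t - (2 * lam * W + δ)) * (t + δ) ≤ 0 := by nlinarith
  have h2 : t ≤ 2 * lam * W + δ := by nlinarith
  have h3 : lam * W ≤ c₂ * δ * W := mul_le_mul_of_nonneg_right hlam2 hW0
  nlinarith

lemma breg_bound (Dv t δ lam W c₁ K₁ : ℝ) (hδ : 0 < δ) (hc₁ : 0 < c₁)
    (hlam1 : c₁ * δ ≤ lam) (hW0 : 0 ≤ W) (htb : t ≤ K₁ * δ)
    (hq : lam * Dv ≤ (1 / 2) * δ ^ 2 + lam * (W * (δ + t))) :
    Dv ≤ (1 / (2 * c₁) + W * (1 + K₁)) * δ := by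
  have hlam0 : 0 < lam := lt_of_lt_of_le (mul_pos hc₁ hδ) hlam1
  have h2 : lam * (W * (δ + t)) ≤ lam * (W * (δ + K₁ * δ)) := by
    apply mul_le_mul_of_nonneg_left _ hlam0.le
    exact mul_le_mul_of_nonneg_left (by linarith) hW0
  have h3 : (1 / 2) * δ ^ 2 ≤ lam * (1 / (2 * c₁) * δ) := by
    have he : c₁ * δ * (1 / (2 * c₁) * δ) = (1 / 2) * δ ^ 2 := by
      field_simp
    nlinarith [mul_le_mul_of_nonneg_right hlam1
      (show (0:ℝ) ≤ 1 / (2 * c₁) * δ by positivity)]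
  have h4 : lam * Dv ≤ lam * ((1 / (2 * c₁) + W * (1 + K₁)) * δ) := by nlinarith
  exact le_of_mul_le_mul_left h4 hlam0

/-- Linear convergence rates for ℓ¹-Tikhonov regularization under the source condition
and restricted injectivity. -/
theorem stmt0 {m n : ℕ} (A : Matrix (Fin m) (Fin n) ℝ) (v : Fin n → ℝ)
    (hsource : ∃ w : Fin m → ℝ,
      (∀ i, v i ≠ 0 → (Aᵀ *ᵥ w) i = Real.sign (v i)) ∧
      (∀ i, v i = 0 → |(Aᵀ *ᵥ w) i| < 1))
    (hinj : ∀ z₁ z₂ : Fin n → ℝ, (∀ i, v i = 0 → z₁ i = 0) →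
      (∀ i, v i = 0 → z₂ i = 0) → A *ᵥ z₁ = A *ᵥ z₂ → z₁ = z₂) :
    ∀ c₁ c₂ : ℝ, 0 < c₁ → c₁ ≤ c₂ →
      ∃ C > (0 : ℝ), ∀ δ > (0 : ℝ), ∀ lam : ℝ, c₁ * δ ≤ lam → lam ≤ c₂ * δ →
        ∀ gδ : Fin m → ℝ, l2norm (A *ᵥ v - gδ) ≤ δ →
          ∀ vlam : Fin n → ℝ,
            (∀ z : Fin n → ℝ,
              (1 / 2) * l2norm (A *ᵥ vlam - gδ) ^ 2 + lam * l1norm vlam ≤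
                (1 / 2) * l2norm (A *ᵥ z - gδ) ^ 2 + lam * l1norm z) →
            l2norm (vlam - v) ≤ C * δ := by
  classical
  obtain ⟨w, hw1, hw2⟩ := hsource
  set η : Fin n → ℝ := Aᵀ *ᵥ w with hη
  clear_value η
  have hη1 : ∀ i, |η i| ≤ 1 := by
    intro i
    by_cases hvi : v i = 0
    · exact (hw2 i hvi).le
    · rw [hw1 i hvi]; exact sign_bound _
  obtain ⟨θ, hθpos, hθ⟩ : ∃ θ : ℝ, 0 < θ ∧ ∀ i, v i = 0 → θ ≤ 1 - |η i| := by
    by_cases hex : ∃ i, v i = 0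
    · obtain ⟨i₀, hi₀⟩ := hex
      set Soff := Finset.univ.filter (fun i => v i = 0) with hSoff
      have hne : Soff.Nonempty := ⟨i₀, by simp [hSoff, hi₀]⟩
      refine ⟨Soff.inf' hne (fun i => 1 - |η i|), ?_, ?_⟩
      · rw [Finset.lt_inf'_iff]
        intro i hi
        have : v i = 0 := by simpa [hSoff] using hi
        linarith [hw2 i this]
      · intro i hi
        exact Finset.inf'_le _ (by simp [hSoff, hi])
    · exact ⟨1, one_pos, fun i hi => absurd ⟨i, hi⟩ hex⟩
  obtain ⟨MA, hMA0, hMA⟩ := opbound A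
  obtain ⟨cA, hcA0, hcA⟩ := injbound A v hinj
  intro c₁ c₂ hc₁ hc₁₂
  have hc₂ : 0 < c₂ := lt_of_lt_of_le hc₁ hc₁₂
  obtain ⟨W, hW⟩ : ∃ x : ℝ, x = l2norm w := ⟨_, rfl⟩
  have hW0 : 0 ≤ W := by rw [hW]; exact l2norm_nonneg' w
  obtain ⟨K₁, hK₁def⟩ : ∃ x : ℝ, x = 2 * c₂ * W + 1 := ⟨_, rfl⟩
  have hK₁1 : 1 ≤ K₁ := by nlinarith [mul_nonneg hc₂.le hW0]
  obtain ⟨K₂, hK₂def⟩ : ∃ x : ℝ, x = 1 / (2 * c₁) + W * (1 + K₁) := ⟨_, rfl⟩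
  have hK₂0 : 0 < K₂ := by
    have h1 : 0 < 1 / (2 * c₁) := by positivity
    have h2 : 0 ≤ W * (1 + K₁) := mul_nonneg hW0 (by linarith)
    rw [hK₂def]; linarith
  obtain ⟨Q, hQdef⟩ : ∃ x : ℝ, x = K₂ / θ := ⟨_, rfl⟩
  have hQ0 : 0 < Q := by rw [hQdef]; exact div_pos hK₂0 hθpos
  refine ⟨cA * (K₁ + 1 + MA * Q) + Q, ?_, ?_⟩
  · have h1 : 0 ≤ MA * Q := mul_nonneg hMA0 hQ0.le
    nlinarith [mul_pos hcA0 (show (0:ℝ) < K₁ + 1 + MA * Q by linarith)]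
  intro δ hδ lam hlam1 hlam2 gδ hg vlam hmin
  have hlam0 : 0 < lam := lt_of_lt_of_le (mul_pos hc₁ hδ) hlam1
  set t := l2norm (A *ᵥ vlam - gδ) with ht
  clear_value t
  have ht0 : 0 ≤ t := by rw [ht]; exact l2norm_nonneg' _
  -- dot product identity
  have hdot : ∀ z : Fin n → ℝ, η ⬝ᵥ z = w ⬝ᵥ (A *ᵥ z) := by
    intro z
    rw [hη, Matrix.mulVec_transpose, ← Matrix.dotProduct_mulVec]
  -- minimality at z = v
  have hE : (1 / 2) * t ^ 2 + lam * l1norm vlam ≤ (1 / 2) * δ ^ 2 + lam * l1norm v := by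
    have h1 := hmin v
    have h2 : l2norm (A *ᵥ v - gδ) ^ 2 ≤ δ ^ 2 :=
      pow_le_pow_left₀ (l2norm_nonneg' _) hg 2
    linarith only [h1, h2]
  -- Bregman distance
  set D : ℝ := l1norm vlam - l1norm v - η ⬝ᵥ (vlam - v) with hDdef
  clear_value D
  have hDform : D = ∑ i, (|vlam i| - η i * vlam i) := by
    have h0 : ∑ i, |v i| = ∑ i, η i * v i := by
      apply Finset.sum_congr rfl
      intro i _
      by_cases hvi : v i = 0
      · simp [hvi]
      · rw [hw1 i hvi, rsign_mul_self]
    have h1 : η ⬝ᵥ (vlam - v) = ∑ i, η i * vlam i - ∑ i, η i * v i := by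
      rw [dotProduct, ← Finset.sum_sub_distrib]
      apply Finset.sum_congr rfl
      intro i _
      have h2 : (vlam - v) i = vlam i - v i := rfl
      rw [h2]; ring
    rw [hDdef, h1, l1norm, l1norm, h0, Finset.sum_sub_distrib]
    ring
  have hterm0 : ∀ i, 0 ≤ |vlam i| - η i * vlam i := by
    intro i
    have h1 : η i * vlam i ≤ |η i * vlam i| := le_abs_self _
    rw [abs_mul] at h1
    nlinarith [hη1 i, abs_nonneg (vlam i), abs_nonneg (η i)]
  set Soff := Finset.univ.filter (fun i => v i = 0) with hSoff
  set s₀ : ℝ := ∑ i ∈ Soff, |vlam i| with hs₀def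
  clear_value s₀
  have hs₀0 : 0 ≤ s₀ := by
    rw [hs₀def]; exact Finset.sum_nonneg fun i _ => abs_nonneg _
  have hDlb : θ * s₀ ≤ D := by
    rw [hDform, hs₀def, Finset.mul_sum]
    calc ∑ i ∈ Soff, θ * |vlam i| ≤ ∑ i ∈ Soff, (|vlam i| - η i * vlam i) := by
          apply Finset.sum_le_sum
          intro i hi
          have hvi : v i = 0 := by simpa [hSoff] using hi
          have h1 : η i * vlam i ≤ |η i| * |vlam i| := by
            rw [← abs_mul]; exact le_abs_self _
          have h2 := hθ i hvi
          nlinarith [abs_nonneg (vlam i)]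
    _ ≤ ∑ i, (|vlam i| - η i * vlam i) := by
          apply Finset.sum_le_sum_of_subset_of_nonneg (Finset.subset_univ _)
          intro i _ _
          exact hterm0 i
  have hD0 : 0 ≤ D := by
    rw [hDform]
    exact Finset.sum_nonneg fun i _ => hterm0 i
  -- bound the dual pairing
  have hdotb : η ⬝ᵥ (v - vlam) ≤ W * (δ + t) := by
    have h1 : A *ᵥ (v - vlam) = (A *ᵥ v - gδ) + (gδ - A *ᵥ vlam) := by
      funext i
      simp only [Matrix.mulVec_sub, Pi.sub_apply, Pi.add_apply]
      ring
    rw [hdot, h1, dotProduct_add]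
    have h2 : w ⬝ᵥ (A *ᵥ v - gδ) ≤ W * δ := by
      rw [hW]
      calc w ⬝ᵥ (A *ᵥ v - gδ) ≤ l2norm w * l2norm (A *ᵥ v - gδ) := dot_le _ _
      _ ≤ l2norm w * δ := mul_le_mul_of_nonneg_left hg (l2norm_nonneg' w)
    have h3 : w ⬝ᵥ (gδ - A *ᵥ vlam) ≤ W * t := by
      rw [hW, ht]
      calc w ⬝ᵥ (gδ - A *ᵥ vlam) ≤ l2norm w * l2norm (gδ - A *ᵥ vlam) := dot_le _ _
      _ = l2norm w * l2norm (A *ᵥ vlam - gδ) := by rw [l2norm_negsub]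
    linarith only [h2, h3]
  have hdotflip : η ⬝ᵥ (vlam - v) = -(η ⬝ᵥ (v - vlam)) := by
    have h1 : (vlam - v : Fin n → ℝ) = -(v - vlam) := by
      funext i; simp only [Pi.sub_apply, Pi.neg_apply]; ring
    rw [h1, dotProduct_neg]
  -- key energy inequality
  have hkey : (1 / 2) * t ^ 2 + lam * D ≤ (1 / 2) * δ ^ 2 + lam * (W * (δ + t)) := by
    have h1 : lam * l1norm vlam = lam * D + lam * l1norm v + lam * (η ⬝ᵥ (vlam - v)) := by
      rw [hDdef]; ring
    rw [h1] at hE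
    have h2 : lam * (η ⬝ᵥ (v - vlam)) ≤ lam * (W * (δ + t)) :=
      mul_le_mul_of_nonneg_left hdotb hlam0.le
    rw [hdotflip] at hE
    linarith only [hE, h2]
  -- residual bound : t ≤ K₁ δ
  have hq1 : (1 / 2) * t ^ 2 ≤ (1 / 2) * δ ^ 2 + lam * (W * (δ + t)) := by
    linarith only [hkey, mul_nonneg hlam0.le hD0]
  have htb : t ≤ K₁ * δ := by
    rw [hK₁def]
    exact quad_bound t δ lam W c₂ ht0 hδ hW0 hlam2 hlam0 hq1
  -- Bregman bound : D ≤ K₂ δ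
  have hDb : D ≤ K₂ * δ := by
    have hq2 : lam * D ≤ (1 / 2) * δ ^ 2 + lam * (W * (δ + t)) := by
      linarith only [hkey, sq_nonneg t]
    rw [hK₂def]
    exact breg_bound D t δ lam W c₁ K₁ hδ hc₁ hlam1 hW0 htb hq2
  -- off-support ℓ¹ bound
  have hs₀b : s₀ ≤ Q * δ := by
    rw [hQdef, div_mul_eq_mul_div, le_div_iff₀ hθpos]
    linarith only [hDlb, hDb]
  -- split vlam - v
  set z₂ : Fin n → ℝ := fun i => if v i = 0 then vlam i else 0 with hz₂def
  set z₁ : Fin n → ℝ := fun i => vlam i - v i - z₂ i with hz₁def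
  clear_value z₁ z₂
  have hz₁supp : ∀ i, v i = 0 → z₁ i = 0 := by
    intro i hi
    rw [hz₁def, hz₂def]
    simp [hi]
  have hsplit : (vlam - v : Fin n → ℝ) = z₁ + z₂ := by
    rw [hz₁def]
    funext i
    simp [Pi.add_apply, Pi.sub_apply]
  have hl1z₂ : l1norm z₂ = s₀ := by
    rw [hz₂def, hs₀def, l1norm, hSoff, Finset.sum_filter]
    apply Finset.sum_congr rfl
    intro i _
    by_cases hvi : v i = 0 <;> simp [hvi]
  have hz₂l2 : l2norm z₂ ≤ Q * δ := by
    calc l2norm z₂ ≤ l1norm z₂ := l2_le_l1 _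
    _ = s₀ := hl1z₂
    _ ≤ Q * δ := hs₀b
  have hAuv : l2norm (A *ᵥ (vlam - v)) ≤ t + δ := by
    rw [Matrix.mulVec_sub]
    have h1 : l2norm (A *ᵥ vlam - A *ᵥ v)
        ≤ l2norm (A *ᵥ vlam - gδ) + l2norm (gδ - A *ᵥ v) := l2_sub_triangle _ _ _
    rw [← ht, l2norm_negsub gδ (A *ᵥ v)] at h1
    linarith only [h1, hg]
  have hz₁l2 : l2norm z₁ ≤ cA * (t + δ + MA * (Q * δ)) := by
    have h1 : l2norm z₁ ≤ cA * l2norm (A *ᵥ z₁) := hcA z₁ hz₁supp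
    have h2 : z₁ = (vlam - v) - z₂ := by
      rw [hz₁def]
      funext i
      simp [Pi.sub_apply]
    have h3 : l2norm (A *ᵥ z₁) ≤ t + δ + MA * (Q * δ) := by
      rw [h2, Matrix.mulVec_sub]
      have h4 : l2norm (A *ᵥ (vlam - v) - A *ᵥ z₂)
          ≤ l2norm (A *ᵥ (vlam - v)) + l2norm (A *ᵥ z₂) := l2_sub_le _ _
      have h5 : l2norm (A *ᵥ z₂) ≤ MA * l2norm z₂ := hMA z₂
      have h6 : MA * l2norm z₂ ≤ MA * (Q * δ) :=
        mul_le_mul_of_nonneg_left hz₂l2 hMA0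
      linarith only [h4, h5, h6, hAuv]
    calc l2norm z₁ ≤ cA * l2norm (A *ᵥ z₁) := h1
    _ ≤ cA * (t + δ + MA * (Q * δ)) := mul_le_mul_of_nonneg_left h3 hcA0.le
  -- conclude
  have hfin : t + δ + MA * (Q * δ) ≤ (K₁ + 1 + MA * Q) * δ := by
    linarith only [htb]
  have hfin2 := mul_le_mul_of_nonneg_left hfin hcA0.le
  calc l2norm (vlam - v) = l2norm (z₁ + z₂) := by rw [hsplit]
  _ ≤ l2norm z₁ + l2norm z₂ := l2_triangle _ _
  _ ≤ (cA * (K₁ + 1 + MA * Q) + Q) * δ := by linarith only [hz₁l2, hz₂l2, hfin2]
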